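/- Let 𝒜 = (Q,Σ,δ,I,F) be a UFA. Suppose that its forward determinization has k states and its backward determinization has ℓ states. Then there exists a simple graph G on the vertex set Q that has at least k cliques and at least ℓ cocliques. -/

import Mathlib

/-- A nondeterministic finite automaton with state type `Q` and alphabet `A`:
transition relation `δ`, initial states `I`, accepting states `F`. -/
structure NFA' (Q A : Type) where
  δ : Q → A → Q → Prop
  I : Set Q
  F : Set Q

namespace NFA'

variable {Q A : Type}

/-- `M.Steps q w q'` holds iff there is a run from `q` to `q'` reading the word `w`. -/
def Steps (M : NFA' Q A) : Q → List A → Q → Prop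
  | q, [], q' => q = q'
  | q, a :: w, q' => ∃ p, M.δ q a p ∧ M.Steps p w q'

/-- An accepting run for the word `w`, given as the sequence of visited states. -/
def IsAccRun (M : NFA' Q A) (w : List A) (r : Fin (w.length + 1) → Q) : Prop :=
  r 0 ∈ M.I ∧ r (Fin.last w.length) ∈ M.F ∧
    ∀ i : Fin w.length, M.δ (r i.castSucc) (w.get i) (r i.succ)

/-- The language recognized by `M`: words with at least one accepting run. -/
def Lang (M : NFA' Q A) : Set (List A) :=
  {w | ∃ r, M.IsAccRun w r}

/-- `M` is unambiguous (a UFA) if every word has at most one accepting run. -/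
def Unambiguous (M : NFA' Q A) : Prop :=
  ∀ (w : List A) (r r' : Fin (w.length + 1) → Q),
    M.IsAccRun w r → M.IsAccRun w r' → r = r'

/-- The state set `{δ(I,w) | w ∈ Σ*}` of the forward determinization of `M`. -/
def fwdStates (M : NFA' Q A) : Set (Set Q) :=
  {S | ∃ w : List A, S = {r | ∃ q ∈ M.I, M.Steps q w r}}

/-- The state set `{δ⁻¹(w,F) | w ∈ Σ*}` of the backward determinization of `M`. -/
def bwdStates (M : NFA' Q A) : Set (Set Q) :=
  {S | ∃ w : List A, S = {r | ∃ q ∈ M.F, M.Steps r w q}}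

lemma steps_run (M : NFA' Q A) :
    ∀ (w : List A) (q q' : Q), M.Steps q w q' →
      ∃ r : Fin (w.length + 1) → Q, r 0 = q ∧ r (Fin.last w.length) = q' ∧
        ∀ i : Fin w.length, M.δ (r i.castSucc) (w.get i) (r i.succ)
  | [], q, q', h => ⟨fun _ => q, rfl, h ▸ rfl, fun i => i.elim0⟩
  | a :: t, q, q', h => by
    obtain ⟨p, hp, hsteps⟩ := h
    obtain ⟨r, hr0, hrl, hrt⟩ := steps_run M t p q' hsteps
    refine ⟨Fin.cons q r, rfl, ?_, ?_⟩
    · have h0 : Fin.last ((a :: t).length) = (Fin.last t.length).succ := rfl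
      rw [h0, Fin.cons_succ, hrl]
    · intro i
      induction i using Fin.cases with
      | zero => simpa [hr0] using hp
      | succ j =>
        have h1 : (j.succ).castSucc = (j.castSucc).succ := by
          rfl
        rw [h1, Fin.cons_succ, Fin.cons_succ]
        simpa using hrt j

lemma steps_run₂ (M : NFA' Q A) :
    ∀ (u w : List A) (q0 q q' : Q), M.Steps q0 u q → M.Steps q w q' →
      ∃ r : Fin ((u ++ w).length + 1) → Q, r 0 = q0 ∧ r (Fin.last (u ++ w).length) = q' ∧
        (∀ i : Fin (u ++ w).length, M.δ (r i.castSucc) ((u ++ w).get i) (r i.succ)) ∧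
        r ⟨u.length, by simp [Nat.lt_succ_iff]⟩ = q
  | [], w, q0, q, q', h0, h => by
    cases h0
    obtain ⟨r, hr0, hrl, hrt⟩ := steps_run M w q0 q' h
    exact ⟨r, hr0, hrl, hrt, hr0⟩
  | a :: t, w, q0, q, q', h0, h => by
    obtain ⟨p, hp, hsteps⟩ := h0
    obtain ⟨r, hr0, hrl, hrt, hrm⟩ := steps_run₂ M t w p q q' hsteps h
    refine ⟨Fin.cons q0 r, rfl, ?_, ?_, ?_⟩
    · have h0 : Fin.last ((a :: t ++ w).length) = (Fin.last ((t ++ w).length)).succ := rfl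
      rw [h0, Fin.cons_succ, hrl]
    · intro i
      induction i using Fin.cases with
      | zero => simpa [hr0] using hp
      | succ j =>
        have h1 : (j.succ).castSucc = (j.castSucc).succ := by
          rfl
        rw [h1, Fin.cons_succ, Fin.cons_succ]
        simpa using hrt j
    · have h0 : (⟨(a :: t).length, by simp [Nat.lt_succ_iff]⟩ :
          Fin ((a :: t ++ w).length + 1)) =
          (⟨t.length, by simp [Nat.lt_succ_iff]⟩ : Fin ((t ++ w).length + 1)).succ := rfl
      rw [h0, Fin.cons_succ, hrm]

lemma key (M : NFA' Q A) (hM : M.Unambiguous) (u w : List A) (q q' : Q)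
    (h1 : ∃ i ∈ M.I, M.Steps i u q) (h2 : ∃ f ∈ M.F, M.Steps q w f)
    (h1' : ∃ i ∈ M.I, M.Steps i u q') (h2' : ∃ f ∈ M.F, M.Steps q' w f) :
    q = q' := by
  obtain ⟨i0, hi0, hs0⟩ := h1
  obtain ⟨f0, hf0, ht0⟩ := h2
  obtain ⟨i1, hi1, hs1⟩ := h1'
  obtain ⟨f1, hf1, ht1⟩ := h2'
  obtain ⟨r, hr0, hrl, hrt, hrm⟩ := steps_run₂ M u w i0 q f0 hs0 ht0
  obtain ⟨r', hr0', hrl', hrt', hrm'⟩ := steps_run₂ M u w i1 q' f1 hs1 ht1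
  have := hM (u ++ w) r r' ⟨hr0 ▸ hi0, hrl ▸ hf0, hrt⟩ ⟨hr0' ▸ hi1, hrl' ▸ hf1, hrt'⟩
  rw [← hrm, ← hrm', this]


end NFA'

/-- If a UFA has a forward determinization with `k` states and a backward
determinization with `ℓ` states, then there is a graph on its state set with at
least `k` cliques and at least `ℓ` cocliques. -/
theorem ufa_graph_many_cliques_cocliques {Q A : Type} [Fintype Q] [Fintype A]
    (M : NFA' Q A) (hM : M.Unambiguous) (k ℓ : ℕ)
    (hk : M.fwdStates.ncard = k) (hℓ : M.bwdStates.ncard = ℓ) :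
    ∃ G : SimpleGraph Q,
      k ≤ {X : Set Q | G.IsClique X}.ncard ∧
      ℓ ≤ {Y : Set Q | Y.Pairwise fun u v => ¬ G.Adj u v}.ncard := by
  classical
  let G : SimpleGraph Q :=
    { Adj := fun x y => x ≠ y ∧ ∃ w, (∃ i ∈ M.I, M.Steps i w x) ∧ (∃ i ∈ M.I, M.Steps i w y)
      symm := by
        constructor
        rintro x y ⟨hne, w, h1, h2⟩
        exact ⟨hne.symm, w, h2, h1⟩
      loopless := by constructor; rintro x ⟨hne, -⟩; exact hne rfl }
  refine ⟨G, ?_, ?_⟩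
  · rw [← hk]
    refine Set.ncard_le_ncard ?_ (Set.toFinite _)
    rintro S ⟨w, rfl⟩
    intro x hx y hy hxy
    exact ⟨hxy, w, hx, hy⟩
  · rw [← hℓ]
    refine Set.ncard_le_ncard ?_ (Set.toFinite _)
    rintro S ⟨w, rfl⟩
    intro x hx y hy hxy hadj
    obtain ⟨-, u, h1, h2⟩ := hadj
    exact hxy (M.key hM u w x y h1 hx h2 hy)
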